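/- arXiv:1901.01698 — 4 statements merged into one kernel-verified Lean document; each statement's English description precedes it below -/
import Mathlib

section
/- For the function f : ℝ² → ℝ defined by f(x,y) = |x² - y⁴|, there exists a constant c > 0 and ε > 0 such that f(x,y) ≥ c · dist((x,y), Z)² for all (x,y) with ‖(x,y)‖ ≤ ε, where Z = {(x,y) : x² = y⁴} is the zero set of f. -/
lemma aux_sq (a b : ℝ) (ha : 0 ≤ a) (hb : 0 ≤ b) : (a - b) ^ 2 ≤ |a ^ 2 - b ^ 2| := by
  have h1 : |a - b| ≤ |a + b| := by
    rw [abs_of_nonneg (by linarith : (0:ℝ) ≤ a + b)]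
    exact abs_le.mpr ⟨by linarith, by linarith⟩
  calc (a - b) ^ 2 = |a - b| * |a - b| := by rw [← abs_mul, abs_of_nonneg (mul_self_nonneg _)]; ring
    _ ≤ |a - b| * |a + b| := mul_le_mul_of_nonneg_left h1 (abs_nonneg _)
    _ = |a ^ 2 - b ^ 2| := by rw [← abs_mul]; ring_nf

theorem stmt0 :
    ∃ c > (0:ℝ), ∃ ε > (0:ℝ), ∀ p : EuclideanSpace ℝ (Fin 2), ‖p‖ ≤ ε →
      |p 0 ^ 2 - p 1 ^ 4| ≥
        c * (Metric.infDist p {q : EuclideanSpace ℝ (Fin 2) | q 0 ^ 2 = q 1 ^ 4}) ^ 2 := by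
  refine ⟨1, one_pos, 1, one_pos, ?_⟩
  intro p _
  set x := p 0 with hx
  set y := p 1 with hy
  set q : EuclideanSpace ℝ (Fin 2) := !₂[if 0 ≤ x then y ^ 2 else -(y ^ 2), y] with hqdef
  have hq0 : q 0 = if 0 ≤ x then y ^ 2 else -(y ^ 2) := rfl
  have hq1 : q 1 = y := rfl
  have hqmem : q ∈ {q : EuclideanSpace ℝ (Fin 2) | q 0 ^ 2 = q 1 ^ 4} := by
    simp only [Set.mem_setOf_eq, hq0, hq1]
    split <;> ring
  have hd : dist p q = |x - q 0| := by
    rw [EuclideanSpace.dist_eq, Fin.sum_univ_two]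
    rw [show dist (p 1) (q 1) = 0 by simp [hq1, hy, Real.dist_eq]]
    rw [Real.dist_eq]
    rw [show |p 0 - q 0| ^ 2 + 0 ^ 2 = (x - q 0) ^ 2 by rw [← hx]; rw [sq_abs]; ring]
    exact Real.sqrt_sq_eq_abs _
  have hle : Metric.infDist p {q : EuclideanSpace ℝ (Fin 2) | q 0 ^ 2 = q 1 ^ 4} ≤ |x - q 0| :=
    hd ▸ Metric.infDist_le_dist_of_mem hqmem
  have hnn : (0:ℝ) ≤ Metric.infDist p {q : EuclideanSpace ℝ (Fin 2) | q 0 ^ 2 = q 1 ^ 4} :=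
    Metric.infDist_nonneg
  have hsq : Metric.infDist p {q : EuclideanSpace ℝ (Fin 2) | q 0 ^ 2 = q 1 ^ 4} ^ 2
      ≤ (x - q 0) ^ 2 := by
    rw [← sq_abs (x - q 0)]
    exact pow_le_pow_left₀ hnn hle 2
  have key : (x - q 0) ^ 2 ≤ |x ^ 2 - y ^ 4| := by
    rw [hq0]
    split <;> rename_i hxx
    · have := aux_sq x (y ^ 2) hxx (sq_nonneg y)
      calc (x - y ^ 2) ^ 2 ≤ |x ^ 2 - (y ^ 2) ^ 2| := this
        _ = |x ^ 2 - y ^ 4| := by ring_nf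
    · have := aux_sq (-x) (y ^ 2) (by linarith) (sq_nonneg y)
      calc (x - -y ^ 2) ^ 2 = ((-x) - y ^ 2) ^ 2 := by ring
        _ ≤ |(-x) ^ 2 - (y ^ 2) ^ 2| := this
        _ = |x ^ 2 - y ^ 4| := by ring_nf
  rw [ge_iff_le, one_mul]
  exact hsq.trans key
end

section
/- For the function f : ℝ² → ℝ defined by f(x,y) = |x² - y⁴|, there is no constant c > 0 such that for all (x,y) in some neighborhood of the origin, the minimal norm of limiting subgradients of f at (x,y) is at least c · dist((x,y), Z), where Z = {(x,y) : x² = y⁴}. Specifically, along the curve (0,t) as t → 0, the minimal subgradient norm is 4t³ while dist((0,t),Z) is of order t², so their ratio tends to 0. -/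
open Filter Topology Metric

noncomputable section

/-- The Fréchet (regular) subdifferential of `f` at `x`. -/
def frechetSubdiff {n : ℕ} (f : EuclideanSpace ℝ (Fin n) → ℝ) (x : EuclideanSpace ℝ (Fin n)) :
    Set (EuclideanSpace ℝ (Fin n)) :=
  {v | ∀ ε > (0:ℝ), ∃ δ > (0:ℝ), ∀ y, ‖y - x‖ < δ →
    f y ≥ f x + (inner ℝ v (y - x) : ℝ) - ε * ‖y - x‖}

/-- The limiting (Mordukhovich) subdifferential of `f` at `x`. -/
def limitingSubdiff {n : ℕ} (f : EuclideanSpace ℝ (Fin n) → ℝ) (x : EuclideanSpace ℝ (Fin n)) :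
    Set (EuclideanSpace ℝ (Fin n)) :=
  {v | ∃ xs vs : ℕ → EuclideanSpace ℝ (Fin n),
    Tendsto xs atTop (𝓝 x) ∧ Tendsto (fun k => f (xs k)) atTop (𝓝 (f x)) ∧
    Tendsto vs atTop (𝓝 v) ∧ ∀ k, vs k ∈ frechetSubdiff f (xs k)}

/-- The nonsmooth slope: minimal norm of limiting subgradients. -/
def mf {n : ℕ} (f : EuclideanSpace ℝ (Fin n) → ℝ) (x : EuclideanSpace ℝ (Fin n)) : ℝ :=
  sInf (norm '' limitingSubdiff f x)

def fEx : EuclideanSpace ℝ (Fin 2) → ℝ := fun p => |p 0 ^ 2 - p 1 ^ 4|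

def Zset : Set (EuclideanSpace ℝ (Fin 2)) := {q | q 0 ^ 2 = q 1 ^ 4}

namespace Stmt1Aux

def P (a b : ℝ) : EuclideanSpace ℝ (Fin 2) := (EuclideanSpace.equiv (Fin 2) ℝ).symm ![a, b]

lemma coord_abs_le (w : EuclideanSpace ℝ (Fin 2)) (i : Fin 2) : |w i| ≤ ‖w‖ := by
  rw [EuclideanSpace.norm_eq, ← Real.sqrt_sq_eq_abs]
  apply Real.sqrt_le_sqrt
  calc w i ^ 2 = ‖w i‖ ^ 2 := by simp [sq_abs]
    _ ≤ ∑ j, ‖w j‖ ^ 2 :=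
      Finset.single_le_sum (f := fun j => ‖w j‖^2) (fun j _ => sq_nonneg _) (Finset.mem_univ i)

lemma inner_eq (v q : EuclideanSpace ℝ (Fin 2)) : (inner ℝ v q : ℝ) = v 0 * q 0 + v 1 * q 1 := by
  rw [PiLp.inner_apply, Fin.sum_univ_two]; simp only [RCLike.inner_apply, conj_trivial]; ring

lemma norm_P (a b : ℝ) : ‖P a b‖ = Real.sqrt (a^2 + b^2) := by
  rw [EuclideanSpace.norm_eq]
  simp [P, Fin.sum_univ_two, sq_abs]

lemma frechet_mem (t : ℝ) : P 0 (4*t^3) ∈ frechetSubdiff fEx (P 0 t) := by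
  intro ε hε
  refine ⟨ε, hε, fun q hq => ?_⟩
  have hx : |(q - P 0 t) 0| ≤ ‖q - P 0 t‖ := coord_abs_le _ 0
  have h0 : (q - P 0 t) 0 = q 0 := by show q 0 - P 0 t 0 = q 0; simp [P]
  rw [h0] at hx
  have hxe : |q 0| < ε := lt_of_le_of_lt hx hq
  have hnn : (0:ℝ) ≤ ‖q - P 0 t‖ := norm_nonneg _
  have hi : (inner ℝ (P 0 (4*t^3)) (q - P 0 t) : ℝ) = 4*t^3 * (q 1 - t) := by
    rw [inner_eq]
    show (P 0 (4*t^3)) 0 * (q 0 - P 0 t 0) + (P 0 (4*t^3)) 1 * (q 1 - P 0 t 1) = _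
    simp [P]
  have hfP : fEx (P 0 t) = t^4 := by
    show |P 0 t 0 ^2 - P 0 t 1 ^ 4| = t ^ 4
    simp only [show P 0 t 0 = (0:ℝ) from rfl, show P 0 t 1 = t from rfl]
    rw [show (0:ℝ)^2 - t^4 = -(t^4) by ring, abs_neg, abs_of_nonneg (by positivity)]
  have hge : fEx q ≥ q 1 ^ 4 - q 0 ^ 2 := by
    show |q 0 ^2 - q 1 ^4| ≥ _
    rw [abs_sub_comm]; exact le_abs_self _
  rw [hi, hfP]
  have key : q 1 ^ 4 - t^4 - 4*t^3*(q 1 - t) = (q 1 - t)^2 * ((q 1 + t)^2 + 2*t^2) := by ring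
  have h2 : q 0 ^ 2 ≤ ε * ‖q - P 0 t‖ := by
    rw [← sq_abs]
    nlinarith [abs_nonneg (q 0)]
  nlinarith [mul_nonneg (sq_nonneg (q 1 - t)) (by positivity : (0:ℝ) ≤ (q 1 + t)^2 + 2*t^2)]

lemma mf_nonneg (x : EuclideanSpace ℝ (Fin 2)) : 0 ≤ mf fEx x := by
  apply Real.sInf_nonneg
  rintro r ⟨v, _, rfl⟩
  exact norm_nonneg v

lemma mf_le (t : ℝ) (ht : 0 ≤ t) : mf fEx (P 0 t) ≤ 4*t^3 := by
  have hmem : P 0 (4*t^3) ∈ limitingSubdiff fEx (P 0 t) :=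
    ⟨fun _ => P 0 t, fun _ => P 0 (4*t^3), tendsto_const_nhds, tendsto_const_nhds,
      tendsto_const_nhds, fun _ => frechet_mem t⟩
  have hb : BddBelow (norm '' limitingSubdiff fEx (P 0 t)) :=
    ⟨0, by rintro r ⟨v, _, rfl⟩; exact norm_nonneg v⟩
  calc mf fEx (P 0 t) ≤ ‖P 0 (4*t^3)‖ := csInf_le hb ⟨_, hmem, rfl⟩
    _ = 4*t^3 := by
        rw [norm_P, show (0:ℝ)^2 + (4*t^3)^2 = (4*t^3)^2 by ring, Real.sqrt_sq (by positivity)]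

lemma zset_nonempty : Zset.Nonempty := ⟨0, by simp [Zset]⟩

lemma infDist_lb {t : ℝ} (ht : 0 < t) (ht1 : t ≤ 1) : t^2/4 ≤ infDist (P 0 t) Zset := by
  rw [Metric.infDist_eq_iInf]
  have : Nonempty Zset := zset_nonempty.to_subtype
  apply le_ciInf
  rintro ⟨q, hq⟩
  have hd : dist (P 0 t) q = ‖P 0 t - q‖ := dist_eq_norm _ _
  have hx : |(P 0 t - q) 0| ≤ ‖P 0 t - q‖ := coord_abs_le _ 0
  have hy : |(P 0 t - q) 1| ≤ ‖P 0 t - q‖ := coord_abs_le _ 1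
  have h0 : (P 0 t - q) 0 = -(q 0) := by show P 0 t 0 - q 0 = _; simp [P]
  have h1 : (P 0 t - q) 1 = t - q 1 := by show P 0 t 1 - q 1 = _; simp [P]
  rw [h0, abs_neg] at hx
  rw [h1] at hy
  have hq' : q 0 ^ 2 = q 1 ^ 4 := hq
  have habs : |q 0| = q 1 ^ 2 := by
    rw [← Real.sqrt_sq_eq_abs, hq', show q 1 ^ 4 = (q 1 ^2)^2 by ring,
      Real.sqrt_sq (sq_nonneg _)]
  rw [hd]
  rcases le_or_gt (t/2) (|t - q 1|) with h | h
  · nlinarith [abs_nonneg (t - q 1)]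
  · have hq1 : t/2 < q 1 := by
      rcases abs_lt.mp h with ⟨h1', h2'⟩; linarith
    nlinarith [hx, habs]

end Stmt1Aux

open Stmt1Aux in
theorem stmt1 :
    (¬ ∃ c > (0:ℝ), ∃ ε > (0:ℝ), ∀ p : EuclideanSpace ℝ (Fin 2), ‖p‖ < ε →
        mf fEx p ≥ c * Metric.infDist p Zset) ∧
    Tendsto
      (fun t : ℝ => mf fEx ((EuclideanSpace.equiv (Fin 2) ℝ).symm ![0, t]) /
        Metric.infDist ((EuclideanSpace.equiv (Fin 2) ℝ).symm ![0, t]) Zset)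
      (𝓝[>] 0) (𝓝 0) := by
  constructor
  · rintro ⟨c, hc, ε, hε, H⟩
    set t := min (ε/2) (min (c/17) 1) with htdef
    have ht : 0 < t := by positivity
    have ht1 : t ≤ 1 := le_trans (min_le_right _ _) (min_le_right _ _)
    have htc : t ≤ c/17 := le_trans (min_le_right _ _) (min_le_left _ _)
    have hte : t < ε := lt_of_le_of_lt (min_le_left _ _) (by linarith)
    have hnorm : ‖P 0 t‖ < ε := by
      rw [norm_P, show (0:ℝ)^2 + t^2 = t^2 by ring, Real.sqrt_sq ht.le]
      exact hte
    have h1 := H (P 0 t) hnorm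
    have h2 := mf_le t ht.le
    have h3 := infDist_lb ht ht1
    have h4 : c * (t^2/4) ≤ c * infDist (P 0 t) Zset :=
      mul_le_mul_of_nonneg_left h3 hc.le
    have h5 : t*t^2 ≤ (c/17)*t^2 := mul_le_mul_of_nonneg_right htc (sq_nonneg t)
    have h6 : 0 < c*t^2 := by positivity
    nlinarith [h5, h6]
  · have hev : ∀ᶠ t in 𝓝[>] (0:ℝ),
        mf fEx (P 0 t) / infDist (P 0 t) Zset ∈ Set.Icc 0 (16*t) := by
      filter_upwards [Ioo_mem_nhdsGT_of_mem (by norm_num : (0:ℝ) ∈ Set.Ico 0 1)] with t ht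
      obtain ⟨ht0, ht1⟩ := ht
      have h2 := mf_le t ht0.le
      have h3 := infDist_lb ht0 ht1.le
      have hdpos : (0:ℝ) < t^2/4 := by positivity
      constructor
      · exact div_nonneg (mf_nonneg _) (infDist_nonneg)
      · calc mf fEx (P 0 t) / infDist (P 0 t) Zset ≤ (4*t^3) / (t^2/4) :=
              div_le_div₀ (by positivity) h2 hdpos h3
          _ = 16*t := by field_simp; ring
    have hlo : Tendsto (fun _ : ℝ => (0:ℝ)) (𝓝[>] 0) (𝓝 0) := tendsto_const_nhds
    have hhi : Tendsto (fun t : ℝ => 16*t) (𝓝[>] 0) (𝓝 0) := by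
      have : Tendsto (fun t : ℝ => 16*t) (𝓝 0) (𝓝 (16*0)) :=
        (tendsto_id.const_mul 16)
      simpa using this.mono_left nhdsWithin_le_nhds
    exact tendsto_of_tendsto_of_tendsto_of_le_of_le' hlo hhi
      (hev.mono fun t h => h.1) (hev.mono fun t h => h.2)
end
end

section
/- Let f : ℝ → ℝ be defined by f(x) = 1 + x² for x < 0 and f(x) = x² for x ≥ 0. Then the limiting subdifferential of f satisfies ∂f(x) = {2x} for x > 0 and for x < 0, and m_f(x) = 2|x| for all x ≠ 0; consequently ∂f is 1-order strongly metrically subregular at 0 for 0 (m_f(x) ≥ 2|x| near 0), but f fails the Łojasiewicz gradient inequality at 0 with exponent 1/2: there are no constants c > 0, ε > 0 with m_f(x) ≥ c·|f(x) - f(0)|^{1/2} for all 0 < |x| < ε. -/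
open Filter Topology

noncomputable section

/-- The Fréchet (regular) subdifferential of `f : ℝ → ℝ` at `x`. -/
def frechetSubdiffR (f : ℝ → ℝ) (x : ℝ) : Set ℝ :=
  {v | ∀ ε > (0:ℝ), ∃ δ > (0:ℝ), ∀ y, |y - x| < δ →
    f y ≥ f x + v * (y - x) - ε * |y - x|}

/-- The limiting (Mordukhovich) subdifferential of `f : ℝ → ℝ` at `x`. -/
def limitingSubdiffR (f : ℝ → ℝ) (x : ℝ) : Set ℝ :=
  {v | ∃ xs vs : ℕ → ℝ,
    Tendsto xs atTop (𝓝 x) ∧ Tendsto (fun k => f (xs k)) atTop (𝓝 (f x)) ∧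
    Tendsto vs atTop (𝓝 v) ∧ ∀ k, vs k ∈ frechetSubdiffR f (xs k)}

/-- The nonsmooth slope: minimal norm of limiting subgradients. -/
def mfR (f : ℝ → ℝ) (x : ℝ) : ℝ := sInf ((fun v => |v|) '' limitingSubdiffR f x)

def f4 : ℝ → ℝ := fun x => if x < 0 then 1 + x ^ 2 else x ^ 2

lemma littleO_bound {f : ℝ → ℝ} {x d : ℝ} (h : HasDerivAt f d x) {ε : ℝ} (hε : 0 < ε) :
    ∃ δ > (0:ℝ), ∀ y, |y - x| < δ → |f y - f x - (y - x) * d| ≤ ε * |y - x| := by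
  have h1 := (hasDerivAt_iff_isLittleO.mp h).def hε
  rw [Metric.eventually_nhds_iff] at h1
  obtain ⟨δ, hδ, hδ'⟩ := h1
  refine ⟨δ, hδ, fun y hy => ?_⟩
  have := hδ' (show dist y x < δ by simpa [Real.dist_eq] using hy)
  simpa [Real.norm_eq_abs, smul_eq_mul] using this

lemma mem_frechet_of_hasDerivAt {f : ℝ → ℝ} {x d : ℝ} (h : HasDerivAt f d x) :
    d ∈ frechetSubdiffR f x := by
  intro ε hε
  obtain ⟨δ, hδ, hδ'⟩ := littleO_bound h hε
  refine ⟨δ, hδ, fun y hy => ?_⟩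
  have h1 := abs_le.mp (hδ' y hy)
  have h2 : d * (y - x) = (y - x) * d := mul_comm _ _
  linarith [h1.1]

lemma frechet_subset_of_hasDerivAt {f : ℝ → ℝ} {x d : ℝ} (h : HasDerivAt f d x) :
    frechetSubdiffR f x ⊆ {d} := by
  intro v hv
  simp only [Set.mem_singleton_iff]
  by_contra hne
  have hA : 0 < |v - d| := abs_pos.mpr (sub_ne_zero.mpr hne)
  set ε := |v - d| / 3 with hεdef
  have hε : 0 < ε := by positivity
  obtain ⟨δ₁, hδ₁, H₁⟩ := hv ε hε
  obtain ⟨δ₂, hδ₂, H₂⟩ := littleO_bound h hε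
  set t := min δ₁ δ₂ / 2 with ht
  have htpos : 0 < t := by positivity
  have ht1 : t < δ₁ := by
    have : t ≤ δ₁ / 2 := by
      apply div_le_div_of_nonneg_right (min_le_left _ _) <;> norm_num
    linarith
  have ht2 : t < δ₂ := by
    have : t ≤ δ₂ / 2 := by
      apply div_le_div_of_nonneg_right (min_le_right _ _) <;> norm_num
    linarith
  have key : ∀ y : ℝ, |y - x| < min δ₁ δ₂ → (v - d) * (y - x) ≤ 2 * ε * |y - x| := by
    intro y hy
    have hy1 : |y - x| < δ₁ := lt_of_lt_of_le hy (min_le_left _ _)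
    have hy2 : |y - x| < δ₂ := lt_of_lt_of_le hy (min_le_right _ _)
    have g1 := H₁ y hy1
    have g2 := (abs_le.mp (H₂ y hy2)).2
    have : v * (y - x) = (y - x) * v := mul_comm _ _
    nlinarith [g1, g2]
  have e1 : (v - d) * t ≤ 2 * ε * t := by
    have := key (x + t) (by
      rw [add_sub_cancel_left, abs_of_pos htpos]
      exact lt_of_lt_of_le (lt_min ht1 ht2) le_rfl)
    simpa [abs_of_pos htpos] using this
  have e2 : (v - d) * (-t) ≤ 2 * ε * t := by
    have := key (x - t) (by
      rw [sub_sub_cancel_left, abs_neg, abs_of_pos htpos]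
      exact lt_min ht1 ht2)
    simpa [abs_of_pos htpos] using this
  have habs : |(v - d) * t| ≤ 2 * ε * t := abs_le.mpr ⟨by linarith, by linarith⟩
  rw [abs_mul, abs_of_pos htpos] at habs
  nlinarith [mul_pos hA htpos]

lemma hasDerivAt_f4 {x : ℝ} (hx : x ≠ 0) : HasDerivAt f4 (2 * x) x := by
  have base : HasDerivAt (fun y : ℝ => y ^ 2) (2 * x) x := by
    simpa using hasDerivAt_pow 2 x
  rcases hx.lt_or_gt with hneg | hpos
  · have h1 : HasDerivAt (fun y : ℝ => 1 + y ^ 2) (2 * x) x := base.const_add 1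
    refine h1.congr_of_eventuallyEq ?_
    filter_upwards [Iio_mem_nhds hneg] with y (hy : y < 0)
    simp [f4, if_pos hy]
  · refine base.congr_of_eventuallyEq ?_
    filter_upwards [Ioi_mem_nhds hpos] with y (hy : 0 < y)
    simp [f4, if_neg (not_lt.mpr (le_of_lt hy))]

lemma frechet_f4 {x : ℝ} (hx : x ≠ 0) : frechetSubdiffR f4 x = {2 * x} :=
  subset_antisymm (frechet_subset_of_hasDerivAt (hasDerivAt_f4 hx))
    (by simpa using mem_frechet_of_hasDerivAt (hasDerivAt_f4 hx))

lemma limiting_f4 {x : ℝ} (hx : x ≠ 0) : limitingSubdiffR f4 x = {2 * x} := by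
  apply subset_antisymm
  · rintro v ⟨xs, vs, hxs, _, hvs, hmem⟩
    have hev : ∀ᶠ k in atTop, vs k = 2 * xs k := by
      filter_upwards [hxs.eventually (eventually_ne_nhds hx)] with k hk
      have := hmem k
      rw [frechet_f4 hk] at this
      exact this
    have h2 : Tendsto (fun k => 2 * xs k) atTop (𝓝 (2 * x)) := hxs.const_mul 2
    have h3 : Tendsto vs atTop (𝓝 (2 * x)) := h2.congr' (hev.mono fun k h => h.symm)
    have : v = 2 * x := tendsto_nhds_unique hvs h3
    simpa using this
  · intro v hv
    simp only [Set.mem_singleton_iff] at hv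
    subst hv
    exact ⟨fun _ => x, fun _ => 2 * x, tendsto_const_nhds, tendsto_const_nhds,
      tendsto_const_nhds, fun _ => mem_frechet_of_hasDerivAt (hasDerivAt_f4 hx)⟩

lemma mf_f4 {x : ℝ} (hx : x ≠ 0) : mfR f4 x = 2 * |x| := by
  rw [mfR, limiting_f4 hx, Set.image_singleton, csInf_singleton, abs_mul]
  norm_num

theorem stmt4 :
    (∀ x : ℝ, x ≠ 0 → limitingSubdiffR f4 x = {2 * x}) ∧
    (∀ x : ℝ, x ≠ 0 → mfR f4 x = 2 * |x|) ∧
    (∃ ε > (0:ℝ), ∀ x : ℝ, x ≠ 0 → |x| ≤ ε → mfR f4 x ≥ 2 * |x|) ∧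
    ¬ ∃ c > (0:ℝ), ∃ ε > (0:ℝ), ∀ x : ℝ, 0 < |x| → |x| < ε →
        mfR f4 x ≥ c * |f4 x - f4 0| ^ ((1:ℝ)/2) := by
  refine ⟨fun x hx => limiting_f4 hx, fun x hx => mf_f4 hx,
    ⟨1, one_pos, fun x hx _ => (mf_f4 hx).ge⟩, ?_⟩
  rintro ⟨c, hc, ε, hε, H⟩
  set x : ℝ := -min (ε / 2) (c / 4) with hxdef
  have hmin : 0 < min (ε / 2) (c / 4) := lt_min (by linarith) (by linarith)
  have hxneg : x < 0 := by simpa [hxdef] using hmin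
  have habs : |x| = min (ε / 2) (c / 4) := by
    rw [hxdef, abs_neg, abs_of_pos hmin]
  have h1 := H x (by rw [habs]; exact hmin) (by
    rw [habs]; exact lt_of_le_of_lt (min_le_left _ _) (by linarith))
  have hf0 : f4 0 = 0 := by simp [f4]
  have hfx : f4 x = 1 + x ^ 2 := by simp [f4, if_pos hxneg]
  have hone : (1:ℝ) ≤ |f4 x - f4 0| ^ ((1:ℝ)/2) := by
    rw [hfx, hf0, sub_zero, abs_of_pos (by positivity)]
    calc (1:ℝ) = (1:ℝ) ^ ((1:ℝ)/2) := (Real.one_rpow _).symm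
    _ ≤ (1 + x ^ 2) ^ ((1:ℝ)/2) :=
        Real.rpow_le_rpow (by norm_num) (by nlinarith) (by norm_num)
  have hm : mfR f4 x = 2 * |x| := mf_f4 (ne_of_lt hxneg)
  have h2 : 2 * |x| ≤ c / 2 := by
    rw [habs]
    have := min_le_right (ε / 2) (c / 4)
    linarith
  have h3 : c ≤ c * |f4 x - f4 0| ^ ((1:ℝ)/2) := by
    nlinarith
  rw [hm] at h1
  linarith
end
end

section
/- Let f : ℝⁿ → ℝ be locally Lipschitz near x̄ with f(x̄) = 0, and suppose there are constants c > 0, ε > 0, α > 0 with f(x) ≥ c‖x - x̄‖^α for ‖x - x̄‖ ≤ ε, and constants c' > 0, ε' > 0 with m_f(x)·‖x - x̄‖ ≥ c'·|f(x)| for 0 < ‖x - x̄‖ ≤ ε'. Then there exist c'' > 0 and ε'' > 0 such that m_f(x) ≥ c''·|f(x)|^{1 - 1/α} for all 0 < ‖x - x̄‖ ≤ ε''. -/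
open Filter Topology Metric

noncomputable section

theorem stmt10 {n : ℕ} (f : EuclideanSpace ℝ (Fin n) → ℝ)
    (x₀ : EuclideanSpace ℝ (Fin n)) (hfx : f x₀ = 0)
    (hlip : ∃ K : NNReal, ∃ r > (0:ℝ), LipschitzOnWith K f (Metric.ball x₀ r))
    (c ε α c' ε' : ℝ) (hc : 0 < c) (hε : 0 < ε) (hα : 0 < α) (hc' : 0 < c') (hε' : 0 < ε')
    (hgrowth : ∀ x, ‖x - x₀‖ ≤ ε → f x ≥ c * ‖x - x₀‖ ^ α)
    (hBL : ∀ x, 0 < ‖x - x₀‖ → ‖x - x₀‖ ≤ ε' → mf f x * ‖x - x₀‖ ≥ c' * |f x|) :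
    ∃ c'' > (0:ℝ), ∃ ε'' > (0:ℝ), ∀ x, 0 < ‖x - x₀‖ → ‖x - x₀‖ ≤ ε'' →
      mf f x ≥ c'' * |f x| ^ (1 - 1/α) := by
  refine ⟨c' * c ^ (1/α), by positivity, min ε ε', lt_min hε hε', ?_⟩
  intro x hx0 hxle
  have hxε : ‖x - x₀‖ ≤ ε := hxle.trans (min_le_left _ _)
  have hxε' : ‖x - x₀‖ ≤ ε' := hxle.trans (min_le_right _ _)
  have hxpow : (0:ℝ) < c * ‖x - x₀‖ ^ α := by positivity
  have hfpos : 0 < f x := lt_of_lt_of_le hxpow (hgrowth x hxε)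
  have habs : |f x| = f x := abs_of_pos hfpos
  have hTpos : (0:ℝ) < (f x / c) ^ (1/α) := by positivity
  have hnormle : ‖x - x₀‖ ≤ (f x / c) ^ (1/α) := by
    have h1 : ‖x - x₀‖ ^ α ≤ f x / c := by
      rw [le_div_iff₀ hc]
      have := hgrowth x hxε
      linarith [this, mul_comm c (‖x - x₀‖ ^ α)]
    have h2 := Real.rpow_le_rpow (by positivity) h1 (by positivity : (0:ℝ) ≤ 1/α)
    rwa [← Real.rpow_mul (norm_nonneg _), mul_one_div_cancel hα.ne', Real.rpow_one] at h2
  have hmf : c' * f x / ‖x - x₀‖ ≤ mf f x := by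
    rw [div_le_iff₀ hx0]
    have := hBL x hx0 hxε'
    rw [habs] at this
    linarith
  have hstep : c' * f x / (f x / c) ^ (1/α) ≤ c' * f x / ‖x - x₀‖ := by
    gcongr
  have heq : c' * f x / (f x / c) ^ (1/α) = c' * c ^ (1/α) * f x ^ (1 - 1/α) := by
    rw [Real.div_rpow hfpos.le hc.le, Real.rpow_sub hfpos, Real.rpow_one]
    field_simp
  rw [habs]
  linarith [heq ▸ hstep]
end
end
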